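/- Degenerate case of the Dunkl-type representation: if λ = (2m+1)/4 for some m ∈ ℕ (i.e. λ = h + 1/4 with 2h = m ∈ ℕ), then ρ₊(z^{2m+1}) = 0, the subspace W = span{z^ℓ : ℓ ≥ 2m+1} of Polynomial ℂ is invariant under ρ₊, ρ₋, and P, the only subspaces of W invariant under ρ₊, ρ₋, and P are the zero subspace and W itself, and the quotient (Polynomial ℂ)/W has ℂ-dimension 2m+1 (that is, 4h+1). -/

import Mathlib

noncomputable section

open Polynomial

/-- The multiplication-by-`z` operator `M_z` on `ℂ[z]`. -/
def Mz : Module.End ℂ (Polynomial ℂ) := LinearMap.mulLeft ℂ (X : Polynomial ℂ)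

/-- The derivative operator `D` on `ℂ[z]`. -/
def Dop : Module.End ℂ (Polynomial ℂ) :=
  (Polynomial.derivative : Polynomial ℂ →ₗ[ℂ] Polynomial ℂ)

/-- The parity operator `P` on `ℂ[z]`: the algebra map `z ↦ −z`,
i.e. `h(z) ↦ h(−z)`, viewed as a ℂ-linear endomorphism. -/
def Pop : Module.End ℂ (Polynomial ℂ) :=
  (Polynomial.aeval (-(X : Polynomial ℂ)) :
    Polynomial ℂ →ₐ[ℂ] Polynomial ℂ).toLinearMap

/-- The operator `Δ : h ↦ (h(z) − h(−z))/z` on `ℂ[z]`. -/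
def DeltaOp : Module.End ℂ (Polynomial ℂ) where
  toFun h := (h - h.comp (-(X : Polynomial ℂ))).divX
  map_add' h g := by
    show ((h + g) - (h + g).comp (-(X : Polynomial ℂ))).divX = _
    rw [Polynomial.add_comp, add_sub_add_comm, Polynomial.divX_add]
  map_smul' c h := by
    show ((c • h) - (c • h).comp (-(X : Polynomial ℂ))).divX = _
    rw [Polynomial.smul_comp, ← smul_sub, Polynomial.smul_eq_C_mul,
      Polynomial.divX_C_mul, ← Polynomial.smul_eq_C_mul]
    rfl

/-- The operator `ρ₊ = (1/2)D − λΔ`. -/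
def rhoP (lam : ℂ) : Module.End ℂ (Polynomial ℂ) :=
  (1 / 2 : ℂ) • Dop - lam • DeltaOp

/-- The operator `ρ₋ = −(1/2)M_z`. -/
def rhoM : Module.End ℂ (Polynomial ℂ) := -((1 / 2 : ℂ) • Mz)

end

open Polynomial

private lemma comp_neg_X_coeff (p : Polynomial ℂ) (n : ℕ) :
    (p.comp (-X)).coeff n = (-1 : ℂ) ^ n * p.coeff n := by
  induction p using Polynomial.induction_on' with
  | add p q hp hq => simp [add_comp, hp, hq]; ring
  | monomial k a =>
    rw [← C_mul_X_pow_eq_monomial]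
    rw [mul_comp, C_comp, X_pow_comp]
    rw [show (-X : Polynomial ℂ) ^ k = C ((-1:ℂ)^k) * X ^ k by
      rw [neg_pow]; simp [C_pow]]
    rw [← mul_assoc, ← C_mul, coeff_C_mul, coeff_C_mul, coeff_X_pow]
    split_ifs with h
    · subst h; ring
    · ring

private noncomputable def eC (lam : ℂ) (n : ℕ) : ℂ := (n : ℂ) / 2 - lam * (1 - (-1) ^ n)

private lemma rhoP_coeff (lam : ℂ) (h : Polynomial ℂ) (k : ℕ) :
    (rhoP lam h).coeff k = eC lam (k + 1) * h.coeff (k + 1) := by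
  have : rhoP lam h = (1/2 : ℂ) • derivative h -
      lam • (h - h.comp (-(X : Polynomial ℂ))).divX := rfl
  rw [this]
  simp only [coeff_sub, coeff_smul, coeff_divX, coeff_sub, coeff_derivative,
    comp_neg_X_coeff, smul_eq_mul, eC]
  push_cast
  ring

private lemma eC_N (m : ℕ) : eC (((2 * m + 1 : ℕ) : ℂ) / 4) (2 * m + 1) = 0 := by
  simp only [eC, pow_succ, pow_mul, neg_one_sq, one_pow, one_mul]
  push_cast; ring

private lemma eC_ne_zero (m : ℕ) {n : ℕ} (hn : 2 * m + 1 < n) :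
    eC (((2 * m + 1 : ℕ) : ℂ) / 4) n ≠ 0 := by
  rcases Nat.even_or_odd n with he | ho
  · obtain ⟨k, rfl⟩ := he
    have hk : k ≠ 0 := by omega
    simp only [eC]
    rw [show ((-1 : ℂ)) ^ (k + k) = 1 by
      rw [← two_mul, pow_mul]; norm_num]
    have : ((k + k : ℕ) : ℂ) ≠ 0 := by exact_mod_cast by omega
    field_simp
    rw [sub_self, mul_zero, sub_zero]
    exact div_ne_zero (mul_ne_zero this (by norm_num)) (by norm_num)
  · obtain ⟨k, rfl⟩ := ho
    simp only [eC]
    rw [show ((-1 : ℂ)) ^ (2 * k + 1) = -1 by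
      rw [pow_succ, pow_mul]; norm_num]
    have h1 : (2 * k + 1 : ℂ) - (2 * m + 1 : ℂ) ≠ 0 := by
      have : (k : ℂ) ≠ (m : ℂ) := by exact_mod_cast (by omega : k ≠ m)
      intro hc; apply this; linear_combination hc / 2
    intro hc; apply h1
    push_cast at hc ⊢
    linear_combination 2 * hc

private lemma rhoP_X_pow_zero (m : ℕ) :
    rhoP (((2 * m + 1 : ℕ) : ℂ) / 4) ((X : Polynomial ℂ) ^ (2 * m + 1)) = 0 := by
  ext k
  rw [rhoP_coeff, coeff_X_pow, coeff_zero]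
  split_ifs with h
  · rw [h, eC_N, zero_mul]
  · rw [mul_zero]

private lemma rhoM_X_pow (ℓ : ℕ) :
    rhoM ((X : Polynomial ℂ) ^ ℓ) = (-(1/2) : ℂ) • (X : Polynomial ℂ) ^ (ℓ + 1) := by
  have : rhoM ((X : Polynomial ℂ) ^ ℓ)
      = -((1/2 : ℂ) • ((X : Polynomial ℂ) * X ^ ℓ)) := rfl
  rw [this, ← pow_succ']
  module

private lemma Pop_X_pow (ℓ : ℕ) :
    Pop ((X : Polynomial ℂ) ^ ℓ) = ((-1 : ℂ)) ^ ℓ • (X : Polynomial ℂ) ^ ℓ := by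
  have : Pop ((X : Polynomial ℂ) ^ ℓ)
      = (aeval (-(X : Polynomial ℂ))) ((X : Polynomial ℂ) ^ ℓ) := rfl
  rw [this, map_pow, aeval_X, neg_pow]
  simp [Algebra.smul_def]

private noncomputable def Wsp (N : ℕ) : Submodule ℂ (Polynomial ℂ) :=
  Submodule.span ℂ ((fun ℓ : ℕ => (X : Polynomial ℂ) ^ ℓ) '' {ℓ | N ≤ ℓ})

private lemma mem_Wsp_iff (N : ℕ) (p : Polynomial ℂ) :
    p ∈ Wsp N ↔ ∀ i < N, p.coeff i = 0 := by
  constructor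
  · intro hp i hi
    have : Wsp N ≤ LinearMap.ker (lcoeff ℂ i) := by
      rw [Wsp, Submodule.span_le]
      rintro _ ⟨ℓ, hℓ, rfl⟩
      simp only [SetLike.mem_coe, LinearMap.mem_ker, lcoeff_apply]
      rw [coeff_X_pow, if_neg]
      have : N ≤ ℓ := hℓ
      omega
    exact this hp
  · intro hp
    rw [p.as_sum_support_C_mul_X_pow]
    apply Submodule.sum_mem
    intro n hn
    rw [← smul_eq_C_mul]
    apply Submodule.smul_mem
    apply Submodule.subset_span
    exact ⟨n, by by_contra hc; exact (mem_support_iff.mp hn) (hp n (Nat.lt_of_not_le hc)), rfl⟩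

private lemma X_pow_mem_Wsp (N : ℕ) {ℓ : ℕ} (h : N ≤ ℓ) : (X : Polynomial ℂ) ^ ℓ ∈ Wsp N :=
  Submodule.subset_span ⟨ℓ, h, rfl⟩

private lemma natDegree_ge_of_mem_Wsp (N : ℕ) {p : Polynomial ℂ} (hp : p ∈ Wsp N)
    (h0 : p ≠ 0) : N ≤ p.natDegree := by
  by_contra hc
  apply h0
  ext i
  rcases lt_or_ge i N with hi | hi
  · exact ((mem_Wsp_iff N p).mp hp i hi).trans (coeff_zero i).symm
  · rw [coeff_zero]
    exact coeff_eq_zero_of_natDegree_lt (by omega)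

private lemma isCompl_Wsp (N : ℕ) : IsCompl (Wsp N) (degreeLT ℂ N) := by
  constructor
  · rw [disjoint_iff_inf_le]
    intro p hp
    rw [Submodule.mem_inf] at hp
    obtain ⟨h1, h2⟩ := hp
    rw [mem_degreeLT] at h2
    rw [mem_Wsp_iff] at h1
    have : p = 0 := by
      ext i
      rcases lt_or_ge i N with hi | hi
      · simpa using h1 i hi
      · rw [coeff_zero]
        apply coeff_eq_zero_of_degree_lt
        exact lt_of_lt_of_le h2 (by exact_mod_cast hi)
    rw [Submodule.mem_bot]; exact this
  · rw [codisjoint_iff_le_sup]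
    intro p _
    induction p using Polynomial.induction_on' with
    | add p q hp hq => exact Submodule.add_mem _ (hp trivial) (hq trivial)
    | monomial k a =>
      rcases le_or_gt N k with hk | hk
      · apply Submodule.mem_sup_left
        rw [← C_mul_X_pow_eq_monomial, ← smul_eq_C_mul]
        exact Submodule.smul_mem _ _ (X_pow_mem_Wsp N hk)
      · apply Submodule.mem_sup_right
        rw [mem_degreeLT]
        exact lt_of_le_of_lt (degree_monomial_le k a) (by exact_mod_cast hk)

private lemma finrank_quot_Wsp (N : ℕ) :
    Module.finrank ℂ (Polynomial ℂ ⧸ Wsp N) = N := by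
  rw [(Submodule.quotientEquivOfIsCompl _ _ (isCompl_Wsp N)).finrank_eq,
    (Polynomial.degreeLTEquiv ℂ N).finrank_eq]
  simp

/-- descent: any nonzero element of an invariant `U` yields `X^(2m+1) ∈ U`. -/
private lemma Xpow_mem_of_invariant (m : ℕ) (U : Submodule ℂ (Polynomial ℂ))
    (hU : U ≤ Wsp (2 * m + 1))
    (hinv : ∀ h ∈ U, rhoP (((2 * m + 1 : ℕ) : ℂ) / 4) h ∈ U) :
    ∀ h ∈ U, h ≠ 0 → (X : Polynomial ℂ) ^ (2 * m + 1) ∈ U := by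
  set N := 2 * m + 1 with hN
  set lam : ℂ := ((2 * m + 1 : ℕ) : ℂ) / 4 with hlam
  suffices H : ∀ d : ℕ, ∀ h ∈ U, h ≠ 0 → h.natDegree = d →
      (X : Polynomial ℂ) ^ N ∈ U by
    intro h hh h0; exact H h.natDegree h hh h0 rfl
  intro d
  induction d using Nat.strong_induction_on with
  | _ d ih =>
    intro h hh h0 hd
    have hNd : N ≤ h.natDegree := natDegree_ge_of_mem_Wsp N (hU hh) h0
    rcases eq_or_lt_of_le hNd with heq | hlt
    · have hc : h.coeff N ≠ 0 := by
        rw [heq]; exact fun hz => h0 (leadingCoeff_eq_zero.mp hz)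
      have hrep : h = h.coeff N • (X : Polynomial ℂ) ^ N := by
        ext i
        rw [coeff_smul, coeff_X_pow, smul_eq_mul]
        rcases lt_trichotomy i N with hi | hi | hi
        · rw [(mem_Wsp_iff N h).mp (hU hh) i hi, if_neg (by omega), mul_zero]
        · rw [if_pos hi, mul_one, hi]
        · rw [coeff_eq_zero_of_natDegree_lt (by omega), if_neg (by omega), mul_zero]
      have : (X : Polynomial ℂ) ^ N = (h.coeff N)⁻¹ • h := by
        nth_rewrite 2 [hrep]
        rw [smul_smul, inv_mul_cancel₀ hc, one_smul]
      rw [this]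
      exact Submodule.smul_mem _ _ hh
    · set h' := rhoP lam h with hh'def
      have hh' : h' ∈ U := hinv h hh
      have hd1 : h.natDegree - 1 + 1 = h.natDegree := by omega
      have hcoeff : h'.coeff (h.natDegree - 1)
          = eC lam h.natDegree * h.coeff h.natDegree := by
        rw [hh'def, rhoP_coeff, hd1]
      have hne : h'.coeff (h.natDegree - 1) ≠ 0 := by
        rw [hcoeff]
        exact mul_ne_zero (eC_ne_zero m hlt)
          (fun hz => h0 (leadingCoeff_eq_zero.mp hz))
      have h'0 : h' ≠ 0 := fun hz => hne (by rw [hz, coeff_zero])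
      have hdeg : h'.natDegree ≤ h.natDegree - 1 := by
        rw [natDegree_le_iff_coeff_eq_zero]
        intro k hk
        rw [hh'def, rhoP_coeff]
        rw [coeff_eq_zero_of_natDegree_lt (by omega), mul_zero]
      exact ih h'.natDegree (by omega) h' hh' h'0 rfl

open Polynomial in
/-- Degenerate case of the Dunkl-type representation, for `λ = (2m+1)/4`:
`ρ₊(z^{2m+1})` = 0`; the subspace `W = span{z^ℓ : ℓ ≥ 2m+1}` is invariant under
`ρ₊`, `ρ₋`, `P`; the only invariant subspaces of `W` are `⊥` and `W`; and the
quotient `ℂ[z]/W` has ℂ-dimension `2m+1` (that is, `4h+1`). -/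
theorem dunkl_degenerate (m : ℕ) (lam : ℂ)
    (hlam : lam = ((2 * m + 1 : ℕ) : ℂ) / 4) :
    rhoP lam ((X : Polynomial ℂ) ^ (2 * m + 1)) = 0 ∧
      (∀ h ∈ Submodule.span ℂ
          ((fun ℓ : ℕ => (X : Polynomial ℂ) ^ ℓ) '' {ℓ | 2 * m + 1 ≤ ℓ}),
        rhoP lam h ∈ Submodule.span ℂ
          ((fun ℓ : ℕ => (X : Polynomial ℂ) ^ ℓ) '' {ℓ | 2 * m + 1 ≤ ℓ}) ∧
        rhoM h ∈ Submodule.span ℂ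
          ((fun ℓ : ℕ => (X : Polynomial ℂ) ^ ℓ) '' {ℓ | 2 * m + 1 ≤ ℓ}) ∧
        Pop h ∈ Submodule.span ℂ
          ((fun ℓ : ℕ => (X : Polynomial ℂ) ^ ℓ) '' {ℓ | 2 * m + 1 ≤ ℓ})) ∧
      (∀ U : Submodule ℂ (Polynomial ℂ),
        U ≤ Submodule.span ℂ
            ((fun ℓ : ℕ => (X : Polynomial ℂ) ^ ℓ) '' {ℓ | 2 * m + 1 ≤ ℓ}) →
        (∀ h ∈ U, rhoP lam h ∈ U) → (∀ h ∈ U, rhoM h ∈ U) → (∀ h ∈ U, Pop h ∈ U) →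
        U = ⊥ ∨
          U = Submodule.span ℂ
            ((fun ℓ : ℕ => (X : Polynomial ℂ) ^ ℓ) '' {ℓ | 2 * m + 1 ≤ ℓ})) ∧
      Module.finrank ℂ
          (Polynomial ℂ ⧸ Submodule.span ℂ
            ((fun ℓ : ℕ => (X : Polynomial ℂ) ^ ℓ) '' {ℓ | 2 * m + 1 ≤ ℓ})) =
        2 * m + 1 := by
  subst hlam
  set N := 2 * m + 1 with hN
  set lam : ℂ := ((2 * m + 1 : ℕ) : ℂ) / 4 with hlam
  have hWdef : Submodule.span ℂ
      ((fun ℓ : ℕ => (X : Polynomial ℂ) ^ ℓ) '' {ℓ | N ≤ ℓ}) = Wsp N := rfl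
  rw [hWdef]
  refine ⟨rhoP_X_pow_zero m, ?_, ?_, finrank_quot_Wsp N⟩
  · intro h hh
    refine ⟨?_, ?_, ?_⟩
    · rw [mem_Wsp_iff]
      intro i hi
      rw [rhoP_coeff]
      rcases eq_or_lt_of_le (Nat.succ_le_of_lt hi) with he | hl
      · have h0' : eC lam N = 0 := eC_N m
        have he' : i + 1 = N := he
        rw [he', h0', zero_mul]
      · rw [(mem_Wsp_iff N h).mp hh (i + 1) hl, mul_zero]
    · have : Wsp N ≤ (Wsp N).comap rhoM := by
        rw [Wsp, Submodule.span_le]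
        rintro _ ⟨ℓ, hℓ, rfl⟩
        simp only [SetLike.mem_coe, Submodule.mem_comap]
        rw [rhoM_X_pow]
        exact Submodule.smul_mem _ _ (X_pow_mem_Wsp N (by exact le_trans hℓ (by omega)))
      exact this hh
    · have : Wsp N ≤ (Wsp N).comap Pop := by
        rw [Wsp, Submodule.span_le]
        rintro _ ⟨ℓ, hℓ, rfl⟩
        simp only [SetLike.mem_coe, Submodule.mem_comap]
        rw [Pop_X_pow]
        exact Submodule.smul_mem _ _ (X_pow_mem_Wsp N hℓ)
      exact this hh
  · intro U hU hP hM _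
    rcases eq_or_ne U ⊥ with hbot | hne
    · exact Or.inl hbot
    · right
      obtain ⟨h, hh, h0⟩ := Submodule.exists_mem_ne_zero_of_ne_bot hne
      have hXN : (X : Polynomial ℂ) ^ N ∈ U :=
        Xpow_mem_of_invariant m U hU hP h hh h0
      have hall : ∀ ℓ, N ≤ ℓ → (X : Polynomial ℂ) ^ ℓ ∈ U := by
        intro ℓ hℓ
        induction ℓ, hℓ using Nat.le_induction with
        | base => exact hXN
        | succ ℓ hℓ ihℓ =>
          have := hM _ ihℓ
          rw [rhoM_X_pow] at this
          have h2 : (X : Polynomial ℂ) ^ (ℓ + 1)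
              = (-2 : ℂ) • ((-(1/2) : ℂ) • (X : Polynomial ℂ) ^ (ℓ + 1)) := by
            rw [smul_smul]; norm_num
          rw [h2]
          exact Submodule.smul_mem _ _ this
      refine le_antisymm hU ?_
      rw [Wsp, Submodule.span_le]
      rintro _ ⟨ℓ, hℓ, rfl⟩
      exact hall ℓ hℓ
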